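/- Let 0 < β < 1 and let N ≥ 1 and N_g > N be natural numbers. Then S(N, β, N_g) := 1 − ∑_{n=0}^N C(n+N−1, n)·(1/(1+β))^N·(β/(1+β))^n·(1 − β^{N−n+1})/(1 − β^{N_g+1}) satisfies S(N, β, N_g) ≤ S(N, β), where S(N, β) := 1 − ∑_{n=0}^N C(n+N−1, n)·(1/(1+β))^N·(β/(1+β))^n·(1 − β^{N−n+1}). That is, the never-give-up success probability S(N, β) is an upper bound on the success probability of any attacker with give-up threshold N_g. -/
import Mathlib


/-- For 0 < β < 1, N ≥ 1 and N_g > N, the success probability with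
give-up threshold N_g,
S(N, β, N_g) = 1 − ∑_{n=0}^N C(n+N−1, n)·(1/(1+β))^N·(β/(1+β))^n·(1 − β^{N−n+1})/(1 − β^{N_g+1}),
is bounded above by the never-give-up success probability
S(N, β) = 1 − ∑_{n=0}^N C(n+N−1, n)·(1/(1+β))^N·(β/(1+β))^n·(1 − β^{N−n+1}). -/
theorem stmt_13 (β : ℝ) (hβ0 : 0 < β) (hβ1 : β < 1) (N Ng : ℕ) (hN : 1 ≤ N)
    (hNg : N < Ng) :
    1 - ∑ n ∈ Finset.range (N + 1),
        ((n + N - 1).choose n : ℝ) * (1 / (1 + β)) ^ N * (β / (1 + β)) ^ n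
          * (1 - β ^ (N - n + 1)) / (1 - β ^ (Ng + 1))
      ≤ 1 - ∑ n ∈ Finset.range (N + 1),
          ((n + N - 1).choose n : ℝ) * (1 / (1 + β)) ^ N * (β / (1 + β)) ^ n
            * (1 - β ^ (N - n + 1)) := by
  have hDpos : 0 < 1 - β ^ (Ng + 1) := by
    have : β ^ (Ng + 1) < 1 := pow_lt_one₀ hβ0.le hβ1 (Nat.succ_ne_zero Ng)
    linarith
  have hD1 : 1 - β ^ (Ng + 1) ≤ 1 := by nlinarith [pow_pos hβ0 (Ng+1)]
  have hterm : ∀ n ∈ Finset.range (N + 1),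
      0 ≤ ((n + N - 1).choose n : ℝ) * (1 / (1 + β)) ^ N * (β / (1 + β)) ^ n
        * (1 - β ^ (N - n + 1)) := by
    intro n _
    have h1 : β ^ (N - n + 1) ≤ 1 := pow_le_one₀ hβ0.le hβ1.le
    have h0 : (0:ℝ) ≤ 1 - β ^ (N - n + 1) := by linarith
    positivity
  set s := ∑ n ∈ Finset.range (N + 1),
      ((n + N - 1).choose n : ℝ) * (1 / (1 + β)) ^ N * (β / (1 + β)) ^ n
        * (1 - β ^ (N - n + 1)) with hs
  have hsum : ∑ n ∈ Finset.range (N + 1),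
      ((n + N - 1).choose n : ℝ) * (1 / (1 + β)) ^ N * (β / (1 + β)) ^ n
        * (1 - β ^ (N - n + 1)) / (1 - β ^ (Ng + 1)) = s / (1 - β ^ (Ng + 1)) := by
    rw [hs, Finset.sum_div]
  rw [hsum]
  have hs0 : 0 ≤ s := Finset.sum_nonneg hterm
  have : s ≤ s / (1 - β ^ (Ng + 1)) := by
    rw [le_div_iff₀ hDpos]
    nlinarith
  linarith
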